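/- Let N ≥ 2. For every x ∈ (0,1), the S_N-orbit of x is infinite, i.e. the set { f(x) : f ∈ F(N), f differentiable at x, f'(x) = 1 } is an infinite set. -/

import Mathlib

/-- A real number is an `N`-adic rational if it equals `k / N^m` for some `k : ℤ`, `m : ℕ`. -/
def IsNAdic (N : ℕ) (x : ℝ) : Prop :=
  ∃ (k : ℤ) (m : ℕ), x = (k : ℝ) / (N : ℝ) ^ m

/-- Membership (as a map of `[0,1]`) in the generalized Thompson group `F(N)`:
`f 0 = 0`, `f 1 = 1`, and there is a finite partition `0 = a 0 < a 1 < ⋯ < a n = 1`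
of `[0,1]` by `N`-adic rationals such that on each piece `[a i, a (i+1)]` the map `f`
is affine with slope an integer power of `N`.  (Such an `f` is automatically an
increasing piecewise-linear homeomorphism of `[0,1]` onto itself, with all
non-differentiability points `N`-adic.) -/
def InFN (N : ℕ) (f : ℝ → ℝ) : Prop :=
  f 0 = 0 ∧ f 1 = 1 ∧
    ∃ (n : ℕ) (a : ℕ → ℝ), 0 < n ∧ a 0 = 0 ∧ a n = 1 ∧
      (∀ i < n, a i < a (i + 1)) ∧
      (∀ i ≤ n, IsNAdic N (a i)) ∧
      (∀ i < n, ∃ q : ℤ, ∀ x ∈ Set.Icc (a i) (a (i + 1)),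
        f x = f (a i) + (N : ℝ) ^ q * (x - a i))

lemma key (N : ℕ) (hN : 2 ≤ N) (x : ℝ) (hx : x ∈ Set.Ioo (0 : ℝ) 1)
    (m : ℕ) (h1 : 1 / (N:ℝ)^m < x) (h2 : (N:ℝ) / (N:ℝ)^m < 1 - x) :
    ∃ f : ℝ → ℝ, InFN N f ∧ HasDerivAt f 1 x ∧ f x = x + ((N:ℝ) - 1) / (N:ℝ)^m := by
  have hN1 : (1:ℝ) < (N:ℝ) := by exact_mod_cast Nat.lt_of_lt_of_le one_lt_two hN
  have hc : (0:ℝ) < (N:ℝ)^m := by positivity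
  set c : ℝ := (N:ℝ)^m with hcdef
  set a1 : ℝ := 1 / c with ha1
  set a2 : ℝ := 1 - (N:ℝ) / c with ha2
  set t : ℝ := ((N:ℝ) - 1) / c with ht
  have hxa2 : x < a2 := by simp only [ha2]; linarith
  have ha12 : a1 < a2 := lt_trans h1 hxa2
  have ha1x : a1 < x := h1
  have ha1pos : 0 < a1 := by positivity
  have ha21 : a2 < 1 := by
    have h : 0 < (N:ℝ)/c := by positivity
    simp only [ha2]; linarith
  set f : ℝ → ℝ := fun z => if z ≤ a1 then N * z else if z ≤ a2 then z + t else 1 + (z - 1) / N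
    with hfdef
  have hNa1 : (N:ℝ) * a1 = a1 + t := by rw [ha1, ht]; field_simp; ring
  have hfA : ∀ z, z ≤ a1 → f z = N * z := fun z h => by
    simp only [hfdef]; rw [if_pos h]
  have hfB : ∀ z, ¬ z ≤ a1 → z ≤ a2 → f z = z + t := fun z h h' => by
    simp only [hfdef]; rw [if_neg h, if_pos h']
  have hfC : ∀ z, ¬ z ≤ a1 → ¬ z ≤ a2 → f z = 1 + (z - 1) / N := fun z h h' => by
    simp only [hfdef]; rw [if_neg h, if_neg h']
  have hf0 : f 0 = 0 := by rw [hfA 0 ha1pos.le]; ring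
  have hf1 : f 1 = 1 := by
    rw [hfC 1 (not_le.mpr (ha1x.trans hx.2)) (not_le.mpr ha21)]; simp
  have hfa2 : f a2 = a2 + t := hfB a2 (not_le.mpr ha12) le_rfl
  refine ⟨f, ⟨hf0, hf1, 3, fun i => if i = 0 then 0 else if i = 1 then a1 else if i = 2 then a2 else 1,
    by norm_num, by norm_num, by norm_num, ?_, ?_, ?_⟩, ?_, ?_⟩
  · intro i hi
    interval_cases i <;> norm_num [ha1pos, ha12, ha21]
  · intro i hi
    interval_cases i
    · exact ⟨0, 0, by norm_num⟩
    · exact ⟨1, m, by norm_num [ha1]; exact hcdef⟩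
    · refine ⟨(N:ℕ)^m - (N:ℕ), m, ?_⟩
      push_cast
      rw [ha2]; field_simp; rw [hcdef]; ring
    · exact ⟨1, 0, by norm_num⟩
  · intro i hi
    interval_cases i
    · refine ⟨1, fun z hz => ?_⟩
      norm_num at hz ⊢
      rw [hfA z hz.2, hf0]
      simp [zpow_one]
    · refine ⟨0, fun z hz => ?_⟩
      norm_num at hz ⊢
      have hfa1 : f a1 = a1 + t := by rw [hfA a1 le_rfl, hNa1]
      rw [hfa1]
      by_cases h : z ≤ a1
      · have hza : z = a1 := le_antisymm h hz.1
        rw [hfA z h, hza, hNa1]; ring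
      · rw [hfB z h hz.2]; ring
    · refine ⟨-1, fun z hz => ?_⟩
      norm_num at hz ⊢
      rw [hfa2]
      have hza1 : ¬ z ≤ a1 := not_le.mpr (lt_of_lt_of_le ha12 hz.1)
      by_cases h : z ≤ a2
      · have hza : z = a2 := le_antisymm h hz.1
        rw [hfB z hza1 h, hza]; ring
      · rw [hfC z hza1 h, ha2, ht]
        field_simp
        ring
  · have hd : HasDerivAt (fun z : ℝ => z + t) 1 x := (hasDerivAt_id x).add_const t
    refine hd.congr_of_eventuallyEq ?_
    filter_upwards [Ioo_mem_nhds ha1x hxa2] with z hz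
    exact hfB z (not_le.mpr hz.1) hz.2.le
  · rw [hfB x (not_le.mpr ha1x) hxa2.le]

/-- For every `x ∈ (0,1)`, the `S_N`-orbit of `x`, i.e. the set
`{ f(x) : f ∈ F(N), f differentiable at x with f'(x) = 1 }`, is infinite. -/
theorem statement12 (N : ℕ) (hN : 2 ≤ N) (x : ℝ) (hx : x ∈ Set.Ioo (0 : ℝ) 1) :
    Set.Infinite { y : ℝ | ∃ f : ℝ → ℝ, InFN N f ∧ HasDerivAt f 1 x ∧ f x = y } := by
  have hN1 : (1:ℝ) < (N:ℝ) := by exact_mod_cast Nat.lt_of_lt_of_le one_lt_two hN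
  obtain ⟨M, hM⟩ := pow_unbounded_of_one_lt (max (1/x) ((N:ℝ)/(1-x))) hN1
  have hx0 := hx.1
  have hx1 : 0 < 1 - x := by linarith [hx.2]
  have hMx : ∀ n : ℕ, 1 / (N:ℝ)^(M+n) < x := by
    intro n
    have h1 : (1:ℝ)/x < (N:ℝ)^M := lt_of_le_of_lt (le_max_left _ _) hM
    have h2 : (N:ℝ)^M ≤ (N:ℝ)^(M+n) := pow_le_pow_right₀ (by linarith) (Nat.le_add_right _ _)
    have hp : (0:ℝ) < (N:ℝ)^(M+n) := by positivity
    rw [div_lt_iff₀ hp]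
    rw [div_lt_iff₀ hx0] at h1
    nlinarith
  have hMx2 : ∀ n : ℕ, (N:ℝ) / (N:ℝ)^(M+n) < 1 - x := by
    intro n
    have h1 : (N:ℝ)/(1-x) < (N:ℝ)^M := lt_of_le_of_lt (le_max_right _ _) hM
    have h2 : (N:ℝ)^M ≤ (N:ℝ)^(M+n) := pow_le_pow_right₀ (by linarith) (Nat.le_add_right _ _)
    have hp : (0:ℝ) < (N:ℝ)^(M+n) := by positivity
    rw [div_lt_iff₀ hp]
    rw [div_lt_iff₀ hx1] at h1
    nlinarith
  apply Set.infinite_of_injective_forall_mem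
    (f := fun n : ℕ => x + ((N:ℝ) - 1) / (N:ℝ)^(M+n)) ?_ ?_
  · intro n1 n2 h
    simp only [add_right_inj] at h
    have hne : (N:ℝ) - 1 ≠ 0 := by linarith
    have hp1 : ((N:ℝ))^(M+n1) ≠ 0 := by positivity
    have hp2 : ((N:ℝ))^(M+n2) ≠ 0 := by positivity
    rw [div_eq_div_iff hp1 hp2] at h
    have hpow : (N:ℝ)^(M+n2) = (N:ℝ)^(M+n1) := mul_left_cancel₀ hne h
    have : N^(M+n2) = N^(M+n1) := by exact_mod_cast hpow
    have := Nat.pow_right_injective hN this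
    omega
  · intro n
    obtain ⟨f, hf⟩ := key N hN x hx (M+n) (hMx n) (hMx2 n)
    exact ⟨f, hf.1, hf.2.1, hf.2.2⟩
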